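/- Let $C, D$ be nonempty compact convex subsets of $\mathbb{R}^q$. Then $(C \oplus D) \ominus D = C$, where $\oplus$ is Minkowski sum and $C \ominus D = \{x : \{x\} \oplus D \subseteq C\}$ is the Minkowski difference. -/
import Mathlib


open Filter Topology Pointwise

/-- Painlevé–Kuratowski inner limit of a sequence of sets. -/
def innerLim {E : Type*} [MetricSpace E] (C : ℕ → Set E) : Set E :=
  {x | ∃ u : ℕ → E, (∀ n, u n ∈ C n) ∧ Tendsto u atTop (nhds x)}

/-- Painlevé–Kuratowski outer limit of a sequence of sets. -/
def outerLim {E : Type*} [MetricSpace E] (C : ℕ → Set E) : Set E :=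
  {x | ∃ φ : ℕ → ℕ, StrictMono φ ∧ ∃ u : ℕ → E, (∀ n, u n ∈ C (φ n)) ∧ Tendsto u atTop (nhds x)}

/-- Minkowski difference of two sets. -/
def minkDiff {q : ℕ} (A B : Set (EuclideanSpace ℝ (Fin q))) : Set (EuclideanSpace ℝ (Fin q)) :=
  {x | ∀ d ∈ B, x + d ∈ A}

/-- For compact convex sets, the Minkowski difference inverts the Minkowski sum. -/
theorem minkDiff_minkowski_sum_cancel {q : ℕ} (C D : Set (EuclideanSpace ℝ (Fin q)))
    (hCne : C.Nonempty) (hDne : D.Nonempty)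
    (hCc : IsCompact C) (hDc : IsCompact D)
    (hCconv : Convex ℝ C) (hDconv : Convex ℝ D) :
    minkDiff (C + D) D = C := by
  ext x
  constructor
  · intro hx
    by_contra hxC
    obtain ⟨f, u, hfu, hux⟩ :=
      geometric_hahn_banach_closed_point hCconv hCc.isClosed hxC
    obtain ⟨d0, hd0D, hd0max⟩ := hDc.exists_isMaxOn hDne f.continuous.continuousOn
    have hmem : x + d0 ∈ C + D := hx d0 hd0D
    obtain ⟨c, hc, d, hd, hcd⟩ := Set.mem_add.mp hmem
    have h1 : f (x + d0) = f c + f d := by rw [← hcd, map_add]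
    have h2 : f d ≤ f d0 := hd0max hd
    have h3 : f x + f d0 = f c + f d := by rw [← map_add]; exact h1
    have : f x ≤ f c := by linarith
    exact absurd (lt_trans hux (lt_of_le_of_lt this (hfu c hc))) (lt_irrefl _)
  · intro hx d hd
    exact Set.add_mem_add hx hd
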